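/- arXiv:1611.05690 — 5 statements merged into one kernel-verified Lean document; each statement's English description precedes it below -/
import Mathlib

section
/- Lemma (key invariance): Let P ∈ 𝒫 be a shares matrix (row-stochastic, individual rows equal to basis vectors, transient block Q with Q^m → 0), and let P^∞ = lim_m P^m. Then for every subset S of corporations, P_S · P^∞ = P^∞, where P_S replaces row i of P by e_i for i ∈ S. -/
open Filter Matrix Topology
open scoped Classical

/-- The matrix of shares restricted on a set `S`: rows indexed by `S` are replaced by
canonical basis (row) vectors. -/
noncomputable def restrict {ι : Type*} [DecidableEq ι] (P : Matrix ι ι ℝ) (S : Set ι) :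
    Matrix ι ι ℝ :=
  fun i j => if i ∈ S then (if j = i then (1 : ℝ) else 0) else P i j

/-- `P ∈ 𝒫`: a shares matrix with corporation set `NS`. Entries in `[0,1]`, rows sum to `1`,
rows of individuals (indices outside `NS`) are canonical basis vectors, and the powers of the
corporation-to-corporation block `Q` tend to `0`. -/
def IsShares {ι : Type*} [Fintype ι] [DecidableEq ι]
    (NS : Set ι) (P : Matrix ι ι ℝ) : Prop :=
  (∀ i j, 0 ≤ P i j ∧ P i j ≤ 1) ∧
  (∀ i, ∑ j, P i j = 1) ∧
  (∀ i ∉ NS, ∀ j, P i j = if j = i then (1 : ℝ) else 0) ∧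
  Tendsto (fun n => (Matrix.of fun i j : NS => P i j) ^ n) atTop
    (𝓝 (0 : Matrix NS NS ℝ))

/-- key invariance lemma: for a shares matrix `P ∈ 𝒫` with limit
`P^∞ = lim P^m` and any subset `S` of corporations, `P_S * P^∞ = P^∞`. -/
theorem restrict_mul_limit {ι : Type*} [Fintype ι] [DecidableEq ι]
    (NS : Set ι) (P : Matrix ι ι ℝ) (hP : IsShares NS P)
    (Pinf : Matrix ι ι ℝ) (hPinf : Tendsto (fun n => P ^ n) atTop (𝓝 Pinf))
    (S : Set ι) (hS : S ⊆ NS) :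
    restrict P S * Pinf = Pinf := by
  have hmul : P * Pinf = Pinf := by
    have h1 : Tendsto (fun n => P ^ (n + 1)) atTop (𝓝 Pinf) :=
      hPinf.comp (tendsto_add_atTop_nat 1)
    have h2 : Tendsto (fun n => P * P ^ n) atTop (𝓝 (P * Pinf)) := hPinf.const_mul P
    simp only [← pow_succ'] at h2
    exact tendsto_nhds_unique h2 h1
  ext i j
  by_cases hi : i ∈ S
  · simp [Matrix.mul_apply, restrict, hi]
  · have h := congrFun (congrFun hmul i) j
    simpa [Matrix.mul_apply, restrict, hi] using h
end

section
/- Let P ∈ 𝒫 and let S₁ ⊇ S₂ ⊇ … ⊇ S_k be nested subsets of corporations. Then the product (P_{S₁})^{m₁} (P_{S₂})^{m₂} ⋯ (P_{S_{k−1}})^{m_{k−1}} · (P_{S_k})^∞ equals (P_{S_k})^∞, for any positive integers m₁,…,m_{k−1}. -/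
open Filter Matrix Topology
open scoped Classical

private lemma list_prod_fix {ι : Type*} [Fintype ι] [DecidableEq ι]
    (Pinf : Matrix ι ι ℝ) :
    ∀ (L : List (Matrix ι ι ℝ)), (∀ A ∈ L, A * Pinf = Pinf) → L.prod * Pinf = Pinf := by
  intro L
  induction L with
  | nil => intro _; simp
  | cons a l ih =>
    intro h
    rw [List.prod_cons, mul_assoc, ih (fun A hA => h A (List.mem_cons_of_mem _ hA)),
      h a List.mem_cons_self]

private lemma pow_fix {ι : Type*} [Fintype ι] [DecidableEq ι]
    {A Pinf : Matrix ι ι ℝ} (h : A * Pinf = Pinf) (n : ℕ) : A ^ n * Pinf = Pinf := by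
  induction n with
  | zero => simp
  | succ n ih => rw [pow_succ, mul_assoc, h, ih]

/-- for nested subsets of corporations `S 0 ⊇ S 1 ⊇ … ⊇ S k` and positive
exponents `m i`, the ordered product
`(P_{S 0})^{m 0} ⋯ (P_{S (k-1)})^{m (k-1)} * (P_{S k})^∞` equals `(P_{S k})^∞`. -/
theorem nested_restrict_pow_mul_limit {ι : Type*} [Fintype ι] [DecidableEq ι]
    (NS : Set ι) (P : Matrix ι ι ℝ) (hP : IsShares NS P)
    (k : ℕ) (S : Fin (k + 1) → Set ι)
    (hsub : ∀ i, S i ⊆ NS)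
    (hnest : ∀ i j : Fin (k + 1), i ≤ j → S j ⊆ S i)
    (m : Fin k → ℕ) (hm : ∀ i, 0 < m i)
    (Pinf : Matrix ι ι ℝ)
    (hPinf : Tendsto (fun n => (restrict P (S (Fin.last k))) ^ n) atTop (𝓝 Pinf)) :
    (List.ofFn fun i : Fin k => (restrict P (S i.castSucc)) ^ (m i)).prod * Pinf = Pinf := by
  set A := restrict P (S (Fin.last k)) with hA
  -- A * Pinf = Pinf by uniqueness of limits
  have h1 : Tendsto (fun n => A ^ (n + 1)) atTop (𝓝 Pinf) :=
    hPinf.comp (tendsto_add_atTop_nat 1)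
  have h2 : Tendsto (fun n => A ^ (n + 1)) atTop (𝓝 (A * Pinf)) := by
    have : (fun n => A ^ (n + 1)) = fun n => A * A ^ n := by
      funext n; rw [pow_succ']
    rw [this]
    have hc : Continuous fun M : Matrix ι ι ℝ => A * M :=
      continuous_const.matrix_mul continuous_id
    exact (hc.tendsto Pinf).comp hPinf
  have hfix : A * Pinf = Pinf := tendsto_nhds_unique h2 h1
  -- each restricted matrix fixes Pinf
  have hfixT : ∀ i : Fin k, restrict P (S i.castSucc) * Pinf = Pinf := by
    intro i
    ext a b
    by_cases ha : a ∈ S i.castSucc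
    · simp [restrict, Matrix.mul_apply, ha]
    · have ha' : a ∉ S (Fin.last k) := fun h =>
        ha (hnest i.castSucc (Fin.last k) (Fin.le_last _) h)
      have hrow : ∀ l, restrict P (S i.castSucc) a l = A a l := by
        intro l; simp [restrict, hA, ha, ha']
      have := congrFun (congrFun hfix a) b
      simp only [Matrix.mul_apply] at this ⊢
      rw [← this]
      exact Finset.sum_congr rfl fun l _ => by rw [hrow]
  refine list_prod_fix Pinf _ ?_
  intro B hB
  rcases List.mem_ofFn.mp hB with ⟨i, rfl⟩
  exact pow_fix (hfixT i) (m i)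
end

section
/- Let P ∈ 𝒫 and let S₁ ⊇ S₂ ⊇ … ⊇ S_k be nested subsets of corporations. Then (P_{S₁})^∞ (P_{S₂})^∞ ⋯ (P_{S_k})^∞ = (P_{S_k})^∞. -/
open Filter Matrix Topology
open scoped Classical

/-- for nested subsets of corporations `S 0 ⊇ S 1 ⊇ … ⊇ S k`, the ordered
product of the limit matrices `(P_{S 0})^∞ ⋯ (P_{S k})^∞` equals `(P_{S k})^∞`. -/
theorem nested_restrict_limits_prod {ι : Type*} [Fintype ι] [DecidableEq ι]
    (NS : Set ι) (P : Matrix ι ι ℝ) (hP : IsShares NS P)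
    (k : ℕ) (S : Fin (k + 1) → Set ι)
    (hsub : ∀ i, S i ⊆ NS)
    (hnest : ∀ i j : Fin (k + 1), i ≤ j → S j ⊆ S i)
    (Pinf : Fin (k + 1) → Matrix ι ι ℝ)
    (hPinf : ∀ i, Tendsto (fun n => (restrict P (S i)) ^ n) atTop (𝓝 (Pinf i))) :
    (List.ofFn fun i : Fin (k + 1) => Pinf i).prod = Pinf (Fin.last k) := by
  set L := Fin.last k with hL
  have key0 : restrict P (S L) * Pinf L = Pinf L := by
    have h1 : Tendsto (fun n => restrict P (S L) * (restrict P (S L)) ^ n) atTop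
        (𝓝 (restrict P (S L) * Pinf L)) := (hPinf L).const_mul _
    have h2 : Tendsto (fun n => restrict P (S L) * (restrict P (S L)) ^ n) atTop
        (𝓝 (Pinf L)) := by
      have := (hPinf L).comp (tendsto_add_atTop_nat 1)
      simpa [Function.comp_def, pow_succ'] using this
    exact tendsto_nhds_unique h1 h2
  have key1 : ∀ i : Fin (k + 1), restrict P (S i) * Pinf L = Pinf L := by
    intro i
    ext a b
    rw [Matrix.mul_apply]
    by_cases ha : a ∈ S i
    · simp [restrict, ha, ite_mul]
    · have ha' : a ∉ S L := fun h => ha (hnest i L (Fin.le_last i) h)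
      have hrow : ∀ c, restrict P (S i) a c = restrict P (S L) a c := by
        intro c; simp [restrict, ha, ha']
      calc ∑ c, restrict P (S i) a c * Pinf L c b
          = ∑ c, restrict P (S L) a c * Pinf L c b :=
            Finset.sum_congr rfl fun c _ => by rw [hrow c]
        _ = (restrict P (S L) * Pinf L) a b := (Matrix.mul_apply).symm
        _ = Pinf L a b := by rw [key0]
  have key2 : ∀ (i : Fin (k + 1)) (n : ℕ), (restrict P (S i)) ^ n * Pinf L = Pinf L := by
    intro i n
    induction n with
    | zero => simp
    | succ n ih => rw [pow_succ, mul_assoc, key1 i, ih]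
  have key3 : ∀ i : Fin (k + 1), Pinf i * Pinf L = Pinf L := by
    intro i
    have h1 : Tendsto (fun n => (restrict P (S i)) ^ n * Pinf L) atTop
        (𝓝 (Pinf i * Pinf L)) := (hPinf i).mul_const _
    have h2 : Tendsto (fun n => (restrict P (S i)) ^ n * Pinf L) atTop (𝓝 (Pinf L)) := by
      simp only [key2 i]; exact (tendsto_const_nhds : Tendsto (fun _ : ℕ => Pinf L) atTop (𝓝 (Pinf L)))
    exact tendsto_nhds_unique h1 h2
  have hlist : ∀ l : List (Matrix ι ι ℝ), (∀ a ∈ l, a * Pinf L = Pinf L) →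
      l.prod * Pinf L = Pinf L := by
    intro l
    induction l with
    | nil => simp
    | cons a t ih =>
      intro h
      rw [List.prod_cons, mul_assoc, ih (fun b hb => h b (List.mem_cons_of_mem a hb)),
        h a List.mem_cons_self]
  have hofn : (List.ofFn fun i : Fin (k + 1) => Pinf i) =
      (List.ofFn fun i : Fin k => Pinf i.castSucc).concat (Pinf L) := by
    simpa using List.ofFn_succ' (fun i : Fin (k + 1) => Pinf i)
  rw [hofn, List.concat_eq_append, List.prod_append, List.prod_singleton]
  refine hlist _ ?_
  intro a ha
  obtain ⟨i, hi⟩ := List.mem_ofFn.mp ha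
  rw [← hi]
  exact key3 _
end

section
/- Monotonicity of negative sets: with the iteration E^{(n+1)} = E^{(n)} P_{S(E^{(n)})} and S(E) = {i ∈ N_S : E_i < 0}, the sets S(E^{(n)}) are decreasing in n: S(E^{(n+1)}) ⊆ S(E^{(n)}) for all n. -/
open Filter Matrix Topology
open scoped Classical

/-- the sets of corporations with negative income in the iteration
`E^{(n+1)} = E^{(n)} · P_{S(E^{(n)})}` are decreasing: `S(E^{(n+1)}) ⊆ S(E^{(n)})`. -/
theorem negative_sets_decreasing {ι : Type*} [Fintype ι] [DecidableEq ι]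
    (NS : Set ι) (P : Matrix ι ι ℝ) (hP : IsShares NS P)
    (E0 : ι → ℝ) (E : ℕ → ι → ℝ)
    (hE0 : E 0 = E0)
    (hstep : ∀ n, E (n + 1) = Matrix.vecMul (E n) (restrict P {i | i ∈ NS ∧ E n i < 0}))
    (n : ℕ) :
    {i | i ∈ NS ∧ E (n + 1) i < 0} ⊆ {i | i ∈ NS ∧ E n i < 0} := by
  rintro i ⟨hiNS, hneg⟩
  refine ⟨hiNS, ?_⟩
  by_contra h
  push_neg at h
  have hnonneg : 0 ≤ E (n + 1) i := by
    rw [hstep n]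
    simp only [Matrix.vecMul, dotProduct]
    apply Finset.sum_nonneg
    intro j _
    by_cases hj : j ∈ {i | i ∈ NS ∧ E n i < 0}
    · have hij : i ≠ j := by
        rintro rfl
        exact absurd hj.2 (not_lt.mpr h)
      simp [restrict, hj, hij]
    · by_cases hjNS : j ∈ NS
      · have hEj : 0 ≤ E n j := by
          by_contra hEj
          exact hj ⟨hjNS, lt_of_not_ge hEj⟩
        simp only [restrict, if_neg hj]
        exact mul_nonneg hEj (hP.1 j i).1
      · have hij : i ≠ j := fun hh => hjNS (hh ▸ hiNS)
        simp [restrict, hj, hP.2.2.1 j hjNS, hij]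
  exact absurd hneg (not_lt.mpr hnonneg)
end

section
/- Existence and uniqueness of the final attributed income: let P ∈ 𝒫, E⁰ a row vector, and run E^{(n+1)} = E^{(n)} P_{S(E^{(n)})}. Then the limit E^{(∞)} = lim_n E^{(n)} exists and equals E^{(0)} · (P_{S*})^∞, where S* is the eventual stable value of S(E^{(n)}) and (P_{S*})^∞ = lim_m (P_{S*})^m. -/
open Filter Matrix Topology
open scoped Classical

section AuxLemmas

attribute [local instance] Matrix.linftyOpNormedAddCommGroup Matrix.linftyOpNormedRing

lemma summable_pow_of_tendsto_zero {R : Type*} [NormedRing R] [CompleteSpace R] (D : R)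
    (h : Tendsto (fun n => D ^ n) atTop (𝓝 0)) : Summable (fun n => D ^ n) := by
  have hn : Tendsto (fun n => ‖D ^ n‖) atTop (𝓝 0) := by
    simpa using h.norm
  obtain ⟨m, hm1, hm⟩ : ∃ m, 1 ≤ m ∧ ‖D ^ m‖ ≤ 1 / 2 := by
    have := (hn.eventually (eventually_le_nhds (by norm_num : (0:ℝ) < 1/2))).and
      (eventually_ge_atTop 1)
    obtain ⟨m, h1, h2⟩ := this.exists
    exact ⟨m, h2, h1⟩
  set c : ℝ := ∑ r ∈ Finset.range m, ‖D ^ r‖ with hc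
  have hc0 : 0 ≤ c := Finset.sum_nonneg fun _ _ => norm_nonneg _
  have key : ∀ K, ∑ n ∈ Finset.range K, ‖D ^ n‖ ≤ 2 * c := by
    intro K
    induction K using Nat.strong_induction_on with
    | _ K ih =>
      rcases le_or_gt K m with hK | hK
      · calc ∑ n ∈ Finset.range K, ‖D ^ n‖ ≤ ∑ n ∈ Finset.range m, ‖D ^ n‖ :=
              Finset.sum_le_sum_of_subset_of_nonneg
                (Finset.range_subset_range.mpr hK) (fun _ _ _ => norm_nonneg _)
          _ ≤ 2 * c := by linarith
      · obtain ⟨K', rfl⟩ : ∃ K', K = m + K' := ⟨K - m, by omega⟩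
        rw [Finset.sum_range_add]
        have h2 : ∑ n ∈ Finset.range K', ‖D ^ (m + n)‖ ≤
            (1/2) * ∑ n ∈ Finset.range K', ‖D ^ n‖ := by
          rw [Finset.mul_sum]
          refine Finset.sum_le_sum fun n _ => ?_
          calc ‖D ^ (m + n)‖ = ‖D ^ m * D ^ n‖ := by rw [pow_add]
            _ ≤ ‖D ^ m‖ * ‖D ^ n‖ := norm_mul_le _ _
            _ ≤ (1/2) * ‖D ^ n‖ := by
                apply mul_le_mul_of_nonneg_right hm (norm_nonneg _)
        have h3 := ih K' (by omega)
        have h4 : (0:ℝ) ≤ ∑ n ∈ Finset.range K', ‖D ^ n‖ :=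
          Finset.sum_nonneg fun _ _ => norm_nonneg _
        linarith
  exact Summable.of_norm (summable_of_sum_range_le (fun _ => norm_nonneg _) key)

variable {ι : Type*} [Fintype ι] [DecidableEq ι] in

lemma restrict_pow_tendsto (NS : Set ι) (P : Matrix ι ι ℝ) (hP : IsShares NS P)
    (Sstar : Set ι) (hS : Sstar ⊆ NS) :
    ∃ Pinf : Matrix ι ι ℝ, Tendsto (fun n => (restrict P Sstar) ^ n) atTop (𝓝 Pinf) := by
  obtain ⟨hP01, hProw, hPind, hQten⟩ := hP
  set M : Matrix ι ι ℝ := restrict P Sstar with hMdef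
  set T : Set ι := {i | i ∈ NS ∧ i ∉ Sstar} with hTdef
  set D : Matrix ι ι ℝ := (fun i j => if i ∈ T then M i j else 0) with hDdef
  set F : Matrix ι ι ℝ := (fun i j => if i ∈ T then 0 else (if j = i then (1:ℝ) else 0))
    with hFdef
  have hM0 : ∀ i j, 0 ≤ M i j := by
    intro i j
    simp only [hMdef, restrict]
    split
    · split <;> norm_num
    · exact (hP01 i j).1
  have hM1 : ∀ i j, M i j ≤ 1 := by
    intro i j
    simp only [hMdef, restrict]
    split
    · split <;> norm_num
    · exact (hP01 i j).2
  have hMT : ∀ i, i ∈ T → ∀ j, M i j = P i j := by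
    intro i hi j
    simp only [hMdef, restrict, if_neg hi.2]
  have hMD : M = D + F := by
    ext i j
    show M i j = D i j + F i j
    by_cases hi : i ∈ T
    · simp [hDdef, hFdef, hi, Matrix.add_apply, Pi.add_apply]
    · simp only [Matrix.add_apply, Pi.add_apply, hDdef, hFdef, if_neg hi, zero_add]
      by_cases hs : i ∈ Sstar
      · simp [hMdef, restrict, hs]
      · have hns : i ∉ NS := by
          intro hmem; exact hi ⟨hmem, hs⟩
        simp [hMdef, restrict, hs, hPind i hns j]
  have hFF : F * F = F := by
    ext i j
    rw [Matrix.mul_apply]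
    by_cases hi : i ∈ T
    · have h1 : ∀ x, F i x * F x j = 0 := by
        intro x
        have : F i x = 0 := by rw [hFdef]; exact if_pos hi
        rw [this, zero_mul]
      rw [Finset.sum_congr rfl (fun x _ => h1 x), Finset.sum_const_zero]
      rw [hFdef]
      exact (if_pos hi).symm
    · have h1 : ∀ x, F i x * F x j = if x = i then F x j else 0 := by
        intro x
        have : F i x = if x = i then 1 else 0 := by rw [hFdef]; exact if_neg hi
        rw [this]
        split_ifs
        · rw [one_mul]
        · rw [zero_mul]
      rw [Finset.sum_congr rfl (fun x _ => h1 x), Finset.sum_ite_eq' Finset.univ i (fun x => F x j),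
        if_pos (Finset.mem_univ i)]
  have hFD : F * D = 0 := by
    ext i j
    rw [Matrix.mul_apply, Matrix.zero_apply]
    apply Finset.sum_eq_zero
    intro x _
    by_cases hiT : i ∈ T
    · have : F i x = 0 := by rw [hFdef]; exact if_pos hiT
      rw [this, zero_mul]
    · by_cases h2 : x = i
      · subst h2
        have : D x j = 0 := by rw [hDdef]; exact if_neg hiT
        rw [this, mul_zero]
      · have : F i x = 0 := by
          rw [hFdef]
          show (if i ∈ T then (0:ℝ) else if x = i then 1 else 0) = 0
          rw [if_neg hiT]; exact if_neg h2
        rw [this, zero_mul]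
  have hform : ∀ n, M ^ n = D ^ n + (∑ k ∈ Finset.range n, D ^ k) * F := by
    intro n
    induction n with
    | zero => simp
    | succ n ih =>
      rw [pow_succ, ih, hMD, Finset.sum_range_succ, add_mul, add_mul, mul_add, mul_add,
        mul_assoc _ F D, hFD, mul_zero, mul_assoc _ F F, hFF, ← pow_succ]
      abel
  set Q : Matrix NS NS ℝ := Matrix.of (fun i j : NS => P i j) with hQdef
  have hQ0 : ∀ n (a b : NS), 0 ≤ (Q ^ n) a b := by
    intro n
    induction n with
    | zero =>
      intro a b
      rcases eq_or_ne a b with h | h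
      · simp [h, Matrix.one_apply]
      · simp [Matrix.one_apply, h]
    | succ n ih =>
      intro a b
      rw [pow_succ, Matrix.mul_apply]
      exact Finset.sum_nonneg fun c _ => mul_nonneg (ih a c) (hP01 c b).1
  set q : ℕ → ι → ι → ℝ :=
    (fun n i j => if h : i ∈ NS ∧ j ∈ NS then (Q ^ n) ⟨i, h.1⟩ ⟨j, h.2⟩ else 0) with hqdef
  have hq_eq : ∀ (n : ℕ) (i j : ι) (hi : i ∈ NS) (hj : j ∈ NS),
      q n i j = (Q ^ n) ⟨i, hi⟩ ⟨j, hj⟩ := by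
    intro n i j hi hj
    simp only [hqdef]
    rw [dif_pos (⟨hi, hj⟩ : i ∈ NS ∧ j ∈ NS)]
  have hq0 : ∀ n i j, 0 ≤ q n i j := by
    intro n i j
    simp only [hqdef]
    split
    · exact hQ0 n _ _
    · exact le_refl 0
  have hq1 : ∀ i j, i ∈ T → j ∈ NS → q 1 i j = P i j := by
    intro i j hi hj
    rw [hq_eq 1 i j hi.1 hj, pow_one]
    rfl
  have hqmul : ∀ (n : ℕ) (i j : ι), i ∈ NS → j ∈ NS →
      q (n+1) i j = ∑ k ∈ NS.toFinset, q n i k * q 1 k j := by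
    intro n i j hi hj
    rw [hq_eq (n+1) i j hi hj, pow_succ, Matrix.mul_apply]
    rw [Finset.sum_subtype NS.toFinset (fun x => Set.mem_toFinset)
      (fun k => q n i k * q 1 k j)]
    apply Finset.sum_congr rfl
    intro c _
    rw [hq_eq n i ↑c hi c.2, hq_eq 1 ↑c j c.2 hj, pow_one]
  have hDent0 : ∀ i j, 0 ≤ D i j := by
    intro i j
    rw [hDdef]
    show (0:ℝ) ≤ if i ∈ T then M i j else 0
    split_ifs with h
    · exact hM0 i j
    · exact le_refl 0
  have hDent1 : ∀ i j, D i j ≤ 1 := by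
    intro i j
    rw [hDdef]
    show (if i ∈ T then M i j else 0) ≤ 1
    split_ifs with h
    · exact hM1 i j
    · norm_num
  have hDpow0 : ∀ n i j, 0 ≤ (D ^ n) i j := by
    intro n
    induction n with
    | zero =>
      intro i j
      rw [pow_zero, Matrix.one_apply]
      split_ifs <;> norm_num
    | succ n ih =>
      intro i j
      rw [pow_succ, Matrix.mul_apply]
      exact Finset.sum_nonneg fun x _ => mul_nonneg (ih i x) (hDent0 x j)
  have hDrow : ∀ n i j, i ∉ T → (D ^ (n+1)) i j = 0 := by
    intro n i j hi
    rw [pow_succ', Matrix.mul_apply]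
    apply Finset.sum_eq_zero
    intro x _
    have : D i x = 0 := by rw [hDdef]; exact if_neg hi
    rw [this, zero_mul]
  have hDzT : ∀ x j, x ∉ T → D x j = 0 := by
    intro x j hx
    rw [hDdef]; exact if_neg hx
  have hDeqM : ∀ x j, x ∈ T → D x j = M x j := by
    intro x j hx
    rw [hDdef]; exact if_pos hx
  have hsum_ite : ∀ (f : ι → ℝ),
      (∑ x : ι, if x ∈ NS then f x else 0) = ∑ k ∈ NS.toFinset, f k := by
    intro f
    have h1 : ∀ x : ι, (if x ∈ NS then f x else 0) = if x ∈ NS.toFinset then f x else 0 := by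
      intro x; simp [Set.mem_toFinset]
    rw [Finset.sum_congr rfl (fun x _ => h1 x), Finset.sum_ite_mem, Finset.univ_inter]
  have hDq : ∀ n i j, i ∈ T → j ∈ T → (D ^ (n+1)) i j ≤ q (n+1) i j := by
    intro n
    induction n with
    | zero =>
      intro i j hi hj
      rw [pow_one, hq1 i j hi hj.1, hDeqM i j hi, hMT i hi j]
    | succ n ih =>
      intro i j hi hj
      rw [pow_succ, Matrix.mul_apply, hqmul (n+1) i j hi.1 hj.1, ← hsum_ite]
      apply Finset.sum_le_sum
      intro x _
      by_cases hx : x ∈ T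
      · rw [if_pos hx.1]
        have hDj : D x j = q 1 x j := by rw [hDeqM x j hx, hMT x hx j, hq1 x j hx hj.1]
        exact mul_le_mul (ih i x hi hx) (le_of_eq hDj) (hDent0 x j) (hq0 (n+1) i x)
      · rw [hDzT x j hx, mul_zero]
        split_ifs
        · exact mul_nonneg (hq0 (n+1) i x) (hq0 1 x j)
        · exact le_refl 0
  have hbnd : ∀ n i j, (D ^ (n+2)) i j ≤
      (if i ∈ T then ∑ k ∈ NS.toFinset, q (n+1) i k else 0) := by
    intro n i j
    by_cases hi : i ∈ T
    · rw [if_pos hi, pow_succ, Matrix.mul_apply, ← hsum_ite]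
      apply Finset.sum_le_sum
      intro x _
      by_cases hx : x ∈ T
      · rw [if_pos hx.1]
        calc (D ^ (n+1)) i x * D x j ≤ q (n+1) i x * 1 :=
              mul_le_mul (hDq n i x hi hx) (hDent1 x j) (hDent0 x j) (hq0 (n+1) i x)
          _ = q (n+1) i x := mul_one _
      · rw [hDzT x j hx, mul_zero]
        split_ifs
        · exact hq0 (n+1) i x
        · exact le_refl 0
    · rw [hDrow (n+1) i j hi, if_neg hi]
  have hqten' : ∀ i j, Tendsto (fun n => q n i j) atTop (𝓝 0) := by
    intro i j
    by_cases h : i ∈ NS ∧ j ∈ NS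
    · have h1 := tendsto_pi_nhds.mp hQten ⟨i, h.1⟩
      have h2 := tendsto_pi_nhds.mp h1 ⟨j, h.2⟩
      have h3 : (fun n => q n i j) = fun n => (Q ^ n) ⟨i, h.1⟩ ⟨j, h.2⟩ :=
        funext fun n => hq_eq n i j h.1 h.2
      rw [h3]
      simpa using h2
    · have h3 : (fun n => q n i j) = fun _ => (0:ℝ) := by
        funext n
        simp only [hqdef]
        exact dif_neg h
      rw [h3]
      exact tendsto_const_nhds
  have hrowten : ∀ i, Tendsto (fun n => ∑ k ∈ NS.toFinset, q (n+1) i k) atTop (𝓝 0) := by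
    intro i
    have := tendsto_finset_sum NS.toFinset
      (fun k _ => ((hqten' i k).comp (tendsto_add_atTop_nat 1)))
    simpa using this
  have hDten : Tendsto (fun n => D ^ n) atTop (𝓝 0) := by
    apply tendsto_pi_nhds.mpr
    intro i
    apply tendsto_pi_nhds.mpr
    intro j
    have hz : ((0 : Matrix ι ι ℝ) i j) = 0 := rfl
    rw [hz]
    apply (tendsto_add_atTop_iff_nat 2).mp
    apply tendsto_of_tendsto_of_tendsto_of_le_of_le (g := fun _ => (0:ℝ))
      (h := fun n => if i ∈ T then ∑ k ∈ NS.toFinset, q (n+1) i k else 0)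
    · exact tendsto_const_nhds
    · by_cases hi : i ∈ T
      · simp only [if_pos hi]
        exact hrowten i
      · simp only [if_neg hi]
        exact tendsto_const_nhds
    · intro n
      exact hDpow0 (n+2) i j
    · intro n
      exact hbnd n i j
  have hsum := @summable_pow_of_tendsto_zero (Matrix ι ι ℝ) _
    (by exact (inferInstance : CompleteSpace (ι → ι → ℝ))) D hDten
  refine ⟨(∑' n, D ^ n) * F, ?_⟩
  have h1 : Tendsto (fun n => ∑ k ∈ Finset.range n, D ^ k) atTop (𝓝 (∑' n, D ^ n)) :=
    hsum.hasSum.tendsto_sum_nat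
  have h2 : Tendsto (fun n => D ^ n + (∑ k ∈ Finset.range n, D ^ k) * F) atTop
      (𝓝 (0 + (∑' n, D ^ n) * F)) := hDten.add (h1.mul tendsto_const_nhds)
  rw [zero_add] at h2
  exact h2.congr fun n => (hform n).symm

end AuxLemmas

/-- existence and uniqueness of the final attributed income: the iteration
`E^{(n+1)} = E^{(n)} · P_{S(E^{(n)})}` converges, and its limit is
`E^{(0)} · (P_{S*})^∞` where `S*` is the eventual stable value of the negative-income
sets `S(E^{(n)})` and `(P_{S*})^∞ = lim (P_{S*})^m`. -/
theorem final_income_exists_unique {ι : Type*} [Fintype ι] [DecidableEq ι]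
    (NS : Set ι) (P : Matrix ι ι ℝ) (hP : IsShares NS P)
    (E0 : ι → ℝ) (E : ℕ → ι → ℝ)
    (hE0 : E 0 = E0)
    (hstep : ∀ n, E (n + 1) = Matrix.vecMul (E n) (restrict P {i | i ∈ NS ∧ E n i < 0})) :
    ∃ (Sstar : Set ι) (N : ℕ) (Pinf : Matrix ι ι ℝ),
      (∀ n ≥ N, {i | i ∈ NS ∧ E n i < 0} = Sstar) ∧
      Tendsto (fun n => (restrict P Sstar) ^ n) atTop (𝓝 Pinf) ∧
      Tendsto E atTop (𝓝 (Matrix.vecMul E0 Pinf)) := by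

  obtain ⟨hP01, hProw, hPind, hQten⟩ := hP
  set S : ℕ → Set ι := fun n => {i | i ∈ NS ∧ E n i < 0} with hSdef
  have hSNS : ∀ n, S n ⊆ NS := fun n i hi => hi.1
  -- the sets are decreasing
  have hsub : ∀ n, S (n+1) ⊆ S n := by
    intro n i hi
    by_contra hns
    have hiNS : i ∈ NS := hi.1
    have hnonneg : 0 ≤ E (n+1) i := by
      rw [hstep n]
      show 0 ≤ ∑ j, E n j * restrict P (S n) j i
      apply Finset.sum_nonneg
      intro j _
      by_cases hjS : j ∈ S n
      · have hji : ¬(i = j) := by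
          intro h
          exact hns (h ▸ hjS)
        have hz : restrict P (S n) j i = 0 := by
          rw [restrict, if_pos hjS, if_neg hji]
        rw [hz, mul_zero]
      · have hr : restrict P (S n) j i = P j i := by
          rw [restrict, if_neg hjS]
        rw [hr]
        by_cases hjNS : j ∈ NS
        · have h0 : 0 ≤ E n j := not_lt.mp (fun hlt => hjS ⟨hjNS, hlt⟩)
          exact mul_nonneg h0 (hP01 j i).1
        · have hij : ¬(i = j) := fun h => hjNS (h ▸ hiNS)
          rw [hPind j hjNS i, if_neg hij, mul_zero]
    exact absurd hi.2 (not_lt.mpr hnonneg)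
  have hchain : ∀ a b, a ≤ b → S b ⊆ S a := by
    intro a b hab
    induction b, hab using Nat.le_induction with
    | base => exact subset_rfl
    | succ n hn ih => exact (hsub n).trans ih
  -- stabilization
  set c : ℕ → ℕ := fun n => (S n).toFinset.card with hcdef
  obtain ⟨N, hNmem, hNmin⟩ : ∃ N, c N = sInf (Set.range c) ∧ ∀ n, c N ≤ c n := by
    obtain ⟨N, hN⟩ := Nat.sInf_mem (Set.range_nonempty c)
    exact ⟨N, hN, fun n => le_trans (le_of_eq hN) (Nat.sInf_le ⟨n, rfl⟩)⟩
  have hconst : ∀ n ≥ N, S n = S N := by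
    intro n hn
    have h1 : S n ⊆ S N := hchain N n hn
    have h3 : (S n).toFinset = (S N).toFinset :=
      Finset.eq_of_subset_of_card_le (Set.toFinset_subset_toFinset.mpr h1) (hNmin n)
    exact Set.toFinset_inj.mp h3
  have hSsubNS : S N ⊆ NS := hSNS N
  obtain ⟨Pinf, hPinf⟩ := restrict_pow_tendsto NS P ⟨hP01, hProw, hPind, hQten⟩ (S N) hSsubNS
  set M : Matrix ι ι ℝ := restrict P (S N) with hMdef
  have hMP : M * Pinf = Pinf := by
    have h1 : Tendsto (fun n => M * M ^ n) atTop (𝓝 (M * Pinf)) :=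
      tendsto_const_nhds.mul hPinf
    have h2 : Tendsto (fun n => M ^ (n+1)) atTop (𝓝 Pinf) :=
      hPinf.comp (tendsto_add_atTop_nat 1)
    have h3 : (fun n => M * M ^ n) = fun n => M ^ (n+1) :=
      funext fun n => (pow_succ' M n).symm
    rw [h3] at h1
    exact tendsto_nhds_unique h1 h2
  have hSsub : ∀ n, S N ⊆ S n := by
    intro n
    rcases le_or_gt N n with h | h
    · rw [hconst n h]
    · exact hchain n N (le_of_lt h)
  have hRP : ∀ n, restrict P (S n) * Pinf = Pinf := by
    intro n
    ext i j
    rw [Matrix.mul_apply]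
    by_cases hi : i ∈ S n
    · have h1 : ∀ k, restrict P (S n) i k * Pinf k j
          = if k = i then Pinf k j else 0 := by
        intro k
        rw [restrict, if_pos hi]
        split_ifs
        · rw [one_mul]
        · rw [zero_mul]
      rw [Finset.sum_congr rfl (fun k _ => h1 k),
        Finset.sum_ite_eq' Finset.univ i (fun k => Pinf k j),
        if_pos (Finset.mem_univ i)]
    · have hiS : i ∉ S N := fun h => hi (hSsub n h)
      have h1 : ∀ k, restrict P (S n) i k = M i k := by
        intro k
        rw [hMdef, restrict, restrict, if_neg hi, if_neg hiS]
      rw [Finset.sum_congr rfl (fun k _ => by rw [h1 k]), ← Matrix.mul_apply, hMP]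
  have hEinv : ∀ n, Matrix.vecMul (E n) Pinf = Matrix.vecMul E0 Pinf := by
    intro n
    induction n with
    | zero => rw [hE0]
    | succ n ih =>
      rw [hstep n]
      rw [show {i | i ∈ NS ∧ E n i < 0} = S n from rfl]
      rw [Matrix.vecMul_vecMul, hRP n, ih]
  have hEN : ∀ n, N ≤ n → E n = Matrix.vecMul (E N) (M ^ (n - N)) := by
    intro n hn
    induction n, hn using Nat.le_induction with
    | base => simp [Matrix.vecMul_one]
    | succ n hn ih =>
      rw [hstep n]
      rw [show {i | i ∈ NS ∧ E n i < 0} = S n from rfl]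
      have hSn : restrict P (S n) = M := by rw [hconst n hn, hMdef]
      rw [hSn, ih, Matrix.vecMul_vecMul,
        show n + 1 - N = (n - N) + 1 from by omega, pow_succ]
  have hVten : Tendsto (fun m => Matrix.vecMul (E N) (M ^ m)) atTop
      (𝓝 (Matrix.vecMul (E N) Pinf)) := by
    apply tendsto_pi_nhds.mpr
    intro i
    have h1 : ∀ m, Matrix.vecMul (E N) (M ^ m) i = ∑ j, E N j * (M ^ m) j i := fun m => rfl
    have h2 : Matrix.vecMul (E N) Pinf i = ∑ j, E N j * Pinf j i := rfl
    rw [h2]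
    apply Tendsto.congr (fun m => (h1 m).symm)
    apply tendsto_finset_sum
    intro j _
    apply Tendsto.const_mul
    exact tendsto_pi_nhds.mp (tendsto_pi_nhds.mp hPinf j) i
  have hEten : Tendsto E atTop (𝓝 (Matrix.vecMul (E N) Pinf)) := by
    have h4 := hVten.comp (tendsto_sub_atTop_nat N)
    apply h4.congr'
    filter_upwards [eventually_ge_atTop N] with n hn
    exact (hEN n hn).symm
  refine ⟨S N, N, Pinf, ?_, hPinf, ?_⟩
  · intro n hn
    exact hconst n hn
  · rw [← hEinv N]
    exact hEten
end
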